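/- (Hyperplane selection, n = 1 case) Let X be a Polish space and f : X × ℝ → ℝ upper semi-analytic. Suppose there exist b, c : X → ℝ with f(x,y) ≤ b(x)·y + c(x) for all x ∈ X, y ∈ ℝ. Then there exist Borel measurable B, C : X → ℝ with f(x,y) ≤ B(x)·y + C(x) for all x ∈ X, y ∈ ℝ. -/

import Mathlib

open MeasureTheory Set Function PiNat

namespace HypSel

variable {α : Type*}

/-- A countable family of sets is "good" if it admits Borel envelopes with empty intersection. -/
def Good [MeasurableSpace α] (s : ℕ → Set α) : Prop :=
  ∃ B : ℕ → Set α, (∀ i, MeasurableSet (B i)) ∧ (∀ i, s i ⊆ B i) ∧ (⋂ i, B i) = ∅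

lemma Good.mono [MeasurableSpace α] {s t : ℕ → Set α} (h : Good t) (hst : ∀ i, s i ⊆ t i) :
    Good s := by
  obtain ⟨B, h1, h2, h3⟩ := h
  exact ⟨B, h1, fun i => (hst i).trans (h2 i), h3⟩

lemma good_of_empty [MeasurableSpace α] {s : ℕ → Set α} {m : ℕ} (h : s m = ∅) : Good s := by
  classical
  refine ⟨fun i => if i = m then ∅ else univ, fun i => by dsimp only; split <;> simp,
    fun i => ?_, ?_⟩
  · dsimp only
    split
    · next hi => subst hi; simp [h]
    · simp
  · apply eq_empty_iff_forall_notMem.2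
    intro x hx
    have := mem_iInter.1 hx m
    simpa using this

lemma good_of_iUnion [MeasurableSpace α] {s : ℕ → Set α} {m : ℕ} {t : ℕ → Set α}
    (hsm : s m ⊆ ⋃ j, t j) (h : ∀ j, Good (Function.update s m (t j))) : Good s := by
  classical
  choose B hBmeas hBsub hBempty using h
  refine ⟨fun i => if i = m then ⋃ j, B j m else ⋂ j, B j i, ?_, ?_, ?_⟩
  · intro i
    dsimp only
    split
    · exact MeasurableSet.iUnion fun j => hBmeas j m
    · exact MeasurableSet.iInter fun j => hBmeas j i
  · intro i
    dsimp only
    split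
    · next hi =>
      subst hi
      refine hsm.trans (iUnion_mono fun j => ?_)
      have := hBsub j i
      simpa using this
    · next hi =>
      refine subset_iInter fun j => ?_
      have := hBsub j i
      rwa [Function.update_of_ne hi] at this
  · apply eq_empty_iff_forall_notMem.2
    intro x hx
    have hxm := mem_iInter.1 hx m
    rw [if_pos rfl] at hxm
    obtain ⟨j, hj⟩ := mem_iUnion.1 hxm
    have : x ∈ ⋂ i, B j i := by
      refine mem_iInter.2 fun i => ?_
      by_cases hi : i = m
      · subst hi; exact hj
      · have := mem_iInter.1 hx i
        rw [if_neg hi] at this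
        exact mem_iInter.1 this j
    rw [hBempty j] at this
    exact this

/-- **Novikov's theorem** : countably many analytic sets with empty intersection can be enlarged
to Borel sets with empty intersection. -/
theorem novikov [TopologicalSpace α] [PolishSpace α] [MeasurableSpace α] [OpensMeasurableSpace α]
    {A : ℕ → Set α} (hA : ∀ i, AnalyticSet (A i)) (hinter : (⋂ i, A i) = ∅) :
    Good A := by
  classical
  by_contra hbad
  -- represent each `A i` as the range of a continuous function on `ℕ → ℕ`
  have hrep : ∀ i, ∃ f : (ℕ → ℕ) → α, Continuous f ∧ range f = A i := by
    intro i
    have h := hA i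
    rw [AnalyticSet] at h
    rcases h with h | hf
    · refine absurd (Good.mono (good_of_empty
        (s := fun j => if j = i then (∅ : Set α) else univ) (m := i) (by simp)) ?_) hbad
      intro j
      by_cases hj : j = i
      · subst hj; simp [h]
      · simp [hj]
    · exact hf
  choose f fcont frange using hrep
  -- the refinement step
  have step : ∀ (X : ℕ → ℕ → ℕ) (N : ℕ → ℕ),
      ¬ Good (fun i => f i '' cylinder (X i) (N i)) → ∀ m, ∃ X' : ℕ → ℕ → ℕ,
      (∀ i, i ≠ m → X' i = X i) ∧ X' m ∈ cylinder (X m) (N m) ∧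
      ¬ Good (fun i => f i '' cylinder (X' i) (Function.update N m (N m + 1) i)) := by
    intro X N hXN m
    by_contra hcon
    push_neg at hcon
    apply hXN
    apply good_of_iUnion (m := m)
      (t := fun j => f m '' cylinder (Function.update (X m) (N m) j) (N m + 1))
    · rw [← image_iUnion, iUnion_cylinder_update (X m) (N m)]
    · intro j
      set X' : ℕ → ℕ → ℕ := Function.update X m (Function.update (X m) (N m) j) with hX'
      have h1 : ∀ i, i ≠ m → X' i = X i := fun i hi => Function.update_of_ne hi _ _
      have h2 : X' m ∈ cylinder (X m) (N m) := by
        rw [hX', Function.update_self]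
        exact update_mem_cylinder _ _ _
      have h3 := hcon X' h1 h2
      convert h3 using 1
      funext i
      by_cases hi : i = m
      · subst hi; simp [X']
      · simp [Function.update_of_ne hi, h1 i hi]
  -- iterate, visiting every index infinitely often
  set S := {q : (ℕ → ℕ → ℕ) × (ℕ → ℕ) // ¬ Good (fun i => f i '' cylinder (q.1 i) (q.2 i))}
    with hS
  have next : ∀ (p : S) (m : ℕ), ∃ q : S,
      (∀ i, i ≠ m → q.1.1 i = p.1.1 i) ∧ q.1.1 m ∈ cylinder (p.1.1 m) (p.1.2 m) ∧
      q.1.2 = Function.update p.1.2 m (p.1.2 m + 1) := by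
    rintro ⟨⟨X, N⟩, hp⟩ m
    obtain ⟨X', h1, h2, h3⟩ := step X N hp m
    exact ⟨⟨⟨X', Function.update N m (N m + 1)⟩, h3⟩, h1, h2, rfl⟩
  choose F hF1 hF2 hF3 using next
  have hp0 : ¬ Good (fun i => f i '' cylinder ((fun _ _ => (0 : ℕ)) i) ((fun _ => (0 : ℕ)) i)) := by
    have heq : (fun i => f i '' cylinder ((fun _ _ => (0 : ℕ)) i) ((fun _ => (0 : ℕ)) i)) = A := by
      funext i
      simp only [cylinder_zero, image_univ, frange]
    rw [heq]
    exact hbad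
  set e : ℕ → ℕ := fun t => (Nat.unpair t).1 with he
  set p : ℕ → S := fun t => Nat.rec ⟨⟨fun _ _ => 0, fun _ => 0⟩, hp0⟩ (fun t q => F q (e t)) t
    with hp
  have prec : ∀ t, p (t + 1) = F (p t) (e t) := fun t => rfl
  set N : ℕ → ℕ → ℕ := fun t => (p t).1.2 with hN
  set X : ℕ → ℕ → ℕ → ℕ := fun t => (p t).1.1 with hX
  -- evolution of the lengths
  have hNsucc : ∀ t, N (t + 1) = Function.update (N t) (e t) (N t (e t) + 1) := by
    intro t
    show (p (t + 1)).1.2 = Function.update ((p t)).1.2 (e t) ((p t).1.2 (e t) + 1)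
    rw [prec t]
    exact hF3 (p t) (e t)
  have hNmono : ∀ t i, N t i ≤ N (t + 1) i := by
    intro t i
    rw [hNsucc t]
    by_cases hi : i = e t
    · subst hi; simp
    · rw [Function.update_of_ne hi]
  have hNmono' : ∀ i, Monotone fun t => N t i := by
    intro i
    apply monotone_nat_of_le_succ
    intro t
    exact hNmono t i
  have hNe : ∀ t, N (t + 1) (e t) = N t (e t) + 1 := by
    intro t
    rw [hNsucc t, Function.update_self]
  have hNgrow : ∀ i j, j ≤ N (Nat.pair i j + 1) i := by
    intro i j
    induction j with
    | zero => exact Nat.zero_le _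
    | succ j ih =>
      have h1 : Nat.pair i j + 1 ≤ Nat.pair i (j + 1) :=
        Nat.pair_lt_pair_right i (Nat.lt_succ_self j)
      have h2 : N (Nat.pair i j + 1) i ≤ N (Nat.pair i (j + 1)) i := hNmono' i h1
      have h3 : e (Nat.pair i (j + 1)) = i := by
        show (Nat.unpair (Nat.pair i (j + 1))).1 = i
        rw [Nat.unpair_pair]
      have h4 := hNe (Nat.pair i (j + 1))
      rw [h3] at h4
      omega
  -- stabilization of coordinates
  have hstab : ∀ t i j, j < N t i → X (t + 1) i j = X t i j := by
    intro t i j hj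
    by_cases hi : i = e t
    · have h2 : X (t + 1) i ∈ cylinder (X t i) (N t i) := by
        show (p (t + 1)).1.1 i ∈ cylinder ((p t).1.1 i) ((p t).1.2 i)
        rw [prec t, hi]
        exact hF2 (p t) (e t)
      exact mem_cylinder_iff.1 h2 j hj
    · have h1 : X (t + 1) i = X t i := by
        show (p (t + 1)).1.1 i = (p t).1.1 i
        rw [prec t]
        exact hF1 (p t) (e t) i hi
      rw [h1]
  have hstab' : ∀ t t' i j, t ≤ t' → j < N t i → X t' i j = X t i j := by
    intro t t' i j htt' hj
    induction t', htt' using Nat.le_induction with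
    | base => rfl
    | succ t' htt' ih =>
      rw [hstab t' i j (lt_of_lt_of_le hj (hNmono' i htt')), ih]
  -- the limit points
  set z : ℕ → ℕ → ℕ := fun i j => X (Nat.pair i (j + 1) + 1) i j with hz
  have hzX : ∀ t i, ∀ j, j < N t i → z i j = X t i j := by
    intro t i j hj
    have hTj : j < N (Nat.pair i (j + 1) + 1) i := lt_of_lt_of_le (Nat.lt_succ_self j)
      (hNgrow i (j + 1))
    rcases le_total t (Nat.pair i (j + 1) + 1) with h | h
    · exact hstab' t _ i j h hj
    · exact (hstab' _ t i j h hTj).symm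
  have hMem : ∀ t i, z i ∈ cylinder (X t i) (N t i) := by
    intro t i
    rw [mem_cylinder_iff]
    intro j hj
    exact hzX t i j hj
  have M : ∀ t, ¬ Good (fun i => f i '' cylinder (z i) (N t i)) := by
    intro t
    have heq : (fun i => f i '' cylinder (z i) (N t i))
        = fun i => f i '' cylinder (X t i) (N t i) := by
      funext i
      rw [mem_cylinder_iff_eq.1 (hMem t i)]
    rw [heq]
    exact (p t).2
  -- all the limit values must coincide
  set w : ℕ → α := fun i => f i (z i) with hw
  have hwA : ∀ i, w i ∈ A i := fun i => frange i ▸ mem_range_self _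
  have hweq : ∀ i, w i = w 0 := by
    intro i
    by_contra hne
    have hi0 : i ≠ 0 := by rintro rfl; exact hne rfl
    obtain ⟨u, v, u_open, v_open, hu, hv, huv⟩ := t2_separation hne
    letI : MetricSpace (ℕ → ℕ) := metricSpaceNatNat
    obtain ⟨εx, εxpos, hεx⟩ : ∃ εx : ℝ, εx > 0 ∧ Metric.ball (z i) εx ⊆ f i ⁻¹' u := by
      apply Metric.mem_nhds_iff.1
      exact (fcont i).continuousAt.preimage_mem_nhds (u_open.mem_nhds hu)
    obtain ⟨εy, εypos, hεy⟩ : ∃ εy : ℝ, εy > 0 ∧ Metric.ball (z 0) εy ⊆ f 0 ⁻¹' v := by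
      apply Metric.mem_nhds_iff.1
      exact (fcont 0).continuousAt.preimage_mem_nhds (v_open.mem_nhds hv)
    obtain ⟨n, hn⟩ : ∃ n : ℕ, (1 / 2 : ℝ) ^ n < min εx εy :=
      exists_pow_lt_of_lt_one (lt_min εxpos εypos) (by norm_num)
    set t : ℕ := max (Nat.pair i n + 1) (Nat.pair 0 n + 1) with ht
    have hNi' : N (Nat.pair i n + 1) i ≤ N t i :=
      hNmono' i (le_max_left (Nat.pair i n + 1) (Nat.pair 0 n + 1))
    have hN0' : N (Nat.pair 0 n + 1) 0 ≤ N t 0 :=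
      hNmono' 0 (le_max_right (Nat.pair i n + 1) (Nat.pair 0 n + 1))
    have hNi : n ≤ N t i := le_trans (hNgrow i n) hNi'
    have hN0 : n ≤ N t 0 := le_trans (hNgrow 0 n) hN0'
    apply M t
    refine ⟨fun k => if k = i then u else if k = 0 then v else univ, ?_, ?_, ?_⟩
    · intro k
      dsimp only
      split
      · exact u_open.measurableSet
      · split
        · exact v_open.measurableSet
        · exact MeasurableSet.univ
    · intro k
      dsimp only
      split
      · next hk =>
        subst hk
        rw [image_subset_iff]
        refine (cylinder_anti _ hNi).trans ((fun y hy => hεx ?_))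
        rw [Metric.mem_ball]
        exact lt_of_le_of_lt (mem_cylinder_iff_dist_le.1 hy)
          (lt_of_lt_of_le hn (min_le_left _ _))
      · split
        · next hk1 hk2 =>
          subst hk2
          rw [image_subset_iff]
          refine (cylinder_anti _ hN0).trans (fun y hy => hεy ?_)
          rw [Metric.mem_ball]
          exact lt_of_le_of_lt (mem_cylinder_iff_dist_le.1 hy)
            (lt_of_lt_of_le hn (min_le_right _ _))
        · exact subset_univ _
    · apply eq_empty_iff_forall_notMem.2
      intro x hx
      have hxu : x ∈ u := by
        have := mem_iInter.1 hx i
        rwa [if_pos rfl] at this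
      have hxv : x ∈ v := by
        have := mem_iInter.1 hx 0
        rwa [if_neg (Ne.symm hi0), if_pos rfl] at this
      exact (disjoint_left.1 huv) hxu hxv
  have : w 0 ∈ ⋂ i, A i := mem_iInter.2 fun i => hweq i ▸ hwA i
  rw [hinter] at this
  exact this

/-- A real-valued upper semi-analytic function admits a Borel measurable majorant. -/
lemma analyticSet_union [TopologicalSpace α] [T2Space α] {s t : Set α}
    (hs : AnalyticSet s) (ht : AnalyticSet t) : AnalyticSet (s ∪ t) := by
  rw [Set.union_eq_iUnion]
  exact AnalyticSet.iUnion fun b => by cases b <;> simpa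

lemma exists_borel_majorant [TopologicalSpace α] [PolishSpace α] [MeasurableSpace α]
    [BorelSpace α] {g : α → ℝ} (hg : ∀ t : ℝ, AnalyticSet {x | t < g x}) :
    ∃ C : α → ℝ, Measurable C ∧ ∀ x, g x ≤ C x := by
  classical
  obtain ⟨B, hBmeas, hBsub, hBempty⟩ :=
    novikov (A := fun n : ℕ => {x | (n : ℝ) < g x}) (fun n => hg n) (by
      apply eq_empty_iff_forall_notMem.2
      intro x hx
      obtain ⟨n, hn⟩ := exists_nat_gt (g x)
      exact absurd (mem_iInter.1 hx n) (by simpa using hn.le))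
  have hex : ∀ x, ∃ n, x ∉ B n := by
    intro x
    by_contra h
    push_neg at h
    have : x ∈ ⋂ n, B n := mem_iInter.2 h
    rw [hBempty] at this
    exact this
  refine ⟨fun x => (Nat.find (hex x) : ℝ), ?_, ?_⟩
  · have : Measurable fun x => Nat.find (hex x) :=
      measurable_find hex fun n => (hBmeas n).compl
    exact measurable_from_top.comp this
  · intro x
    have h1 : x ∉ B (Nat.find (hex x)) := Nat.find_spec (hex x)
    have h2 : x ∉ {y | ((Nat.find (hex x) : ℕ) : ℝ) < g y} := fun h => h1 (hBsub _ h)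
    simpa using not_lt.1 h2

lemma AnalyticSet.inter' [TopologicalSpace α] [T2Space α] {s t : Set α}
    (hs : AnalyticSet s) (ht : AnalyticSet t) : AnalyticSet (s ∩ t) := by
  rw [Set.inter_eq_iInter]
  exact AnalyticSet.iInter fun b => by cases b <;> simpa

/-- If `F` is upper semi-analytic and `h` is Borel measurable, then `{h < F}` is analytic. -/
lemma analyticSet_lt [TopologicalSpace α] [PolishSpace α] [MeasurableSpace α] [BorelSpace α]
    {F h : α → ℝ} (hF : ∀ t : ℝ, AnalyticSet {z | t < F z}) (hh : Measurable h) :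
    AnalyticSet {z | h z < F z} := by
  have : {z | h z < F z} = ⋃ q : ℚ, ({z | h z ≤ (q : ℝ)} ∩ {z | (q : ℝ) < F z}) := by
    ext z
    simp only [mem_setOf_eq, mem_iUnion, mem_inter_iff]
    constructor
    · intro hz
      obtain ⟨q, hq1, hq2⟩ := exists_rat_btwn hz
      exact ⟨q, hq1.le, hq2⟩
    · rintro ⟨q, hq1, hq2⟩
      exact lt_of_le_of_lt hq1 hq2
  rw [this]
  refine AnalyticSet.iUnion fun q => AnalyticSet.inter' ?_ (hF q)
  exact (hh measurableSet_Iic).analyticSet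

/-- Analytic sandwich lemma: between an upper semi-analytic function `U` and a lower
semi-analytic function `L` with `U ≤ L` there is a Borel measurable function. -/
lemma exists_borel_between [TopologicalSpace α] [PolishSpace α] [MeasurableSpace α]
    [BorelSpace α] {U L : α → ℝ} (hUL : ∀ x, U x ≤ L x)
    (hU : ∀ q : ℚ, AnalyticSet {x | (q : ℝ) < U x})
    (hL : ∀ q : ℚ, AnalyticSet {x | L x < (q : ℝ)}) :
    ∃ B : α → ℝ, Measurable B ∧ ∀ x, U x ≤ B x ∧ B x ≤ L x := by
  classical
  have sep : ∀ q : ℚ, ∃ S : Set α,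
      {x | (q : ℝ) < U x} ⊆ S ∧ Disjoint S {x | L x < (q : ℝ)} ∧ MeasurableSet S := by
    intro q
    have hdisj : Disjoint {x | (q : ℝ) < U x} {x | L x < (q : ℝ)} := by
      rw [disjoint_left]
      intro x hx1 hx2
      simp only [mem_setOf_eq] at hx1 hx2
      exact absurd (hUL x) (by push_neg; exact hx2.trans hx1)
    have hsep := (hU q).measurablySeparable (hL q) hdisj
    rw [MeasurablySeparable] at hsep
    obtain ⟨S, h1, h2, h3⟩ := hsep
    exact ⟨S, h1, h2.symm, h3⟩
  choose S hS1 hS2 hS3 using sep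
  set T : ℚ → Set α := fun q => ⋂ r : {r : ℚ // r ≤ q}, S r with hT
  have hTmeas : ∀ q, MeasurableSet (T q) := fun q => MeasurableSet.iInter fun r => hS3 r
  -- membership facts
  have hmemT : ∀ x (q : ℚ), (q : ℝ) < U x → x ∈ T q := by
    intro x q hq
    refine mem_iInter.2 fun r => hS1 r ?_
    have : (r : ℚ) ≤ q := r.2
    exact lt_of_le_of_lt (by exact_mod_cast this) hq
  have hTle : ∀ x (q : ℚ), x ∈ T q → (q : ℝ) ≤ L x := by
    intro x q hq
    have hxS : x ∈ S q := mem_iInter.1 hq ⟨q, le_refl q⟩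
    by_contra h
    push_neg at h
    exact (disjoint_left.1 (hS2 q)) hxS h
  -- the sandwiched function
  set Q : α → Set ℝ := fun x => {t : ℝ | ∃ q : ℚ, x ∈ T q ∧ t = (q : ℝ)} with hQ
  have hQne : ∀ x, (Q x).Nonempty := by
    intro x
    obtain ⟨q, hq⟩ := exists_rat_lt (U x)
    exact ⟨(q : ℝ), q, hmemT x q hq, rfl⟩
  have hQbdd : ∀ x, ∀ t ∈ Q x, t ≤ L x := by
    rintro x t ⟨q, hq, rfl⟩
    exact hTle x q hq
  refine ⟨fun x => sSup (Q x), ?_, ?_⟩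
  · apply measurable_of_Ioi
    intro t
    have : (fun x => sSup (Q x)) ⁻¹' Set.Ioi t = ⋃ q : {q : ℚ // t < (q : ℝ)}, T q := by
      ext x
      simp only [mem_preimage, mem_Ioi, mem_iUnion]
      constructor
      · intro hx
        obtain ⟨u, hu, htu⟩ := exists_lt_of_lt_csSup (hQne x) hx
        obtain ⟨q, hq, rfl⟩ := hu
        exact ⟨⟨q, htu⟩, hq⟩
      · rintro ⟨⟨q, hq⟩, hx⟩
        have h1 : (q : ℝ) ≤ sSup (Q x) :=
          le_csSup ⟨L x, fun u hu => hQbdd x u hu⟩ ⟨q, hx, rfl⟩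
        exact lt_of_lt_of_le hq h1
    rw [this]
    exact MeasurableSet.iUnion fun q => hTmeas q
  · intro x
    constructor
    · by_contra h
      push_neg at h
      obtain ⟨q, hq1, hq2⟩ := exists_rat_btwn h
      have : (q : ℝ) ≤ sSup (Q x) :=
        le_csSup ⟨L x, fun u hu => hQbdd x u hu⟩ ⟨q, hmemT x q hq2, rfl⟩
      exact absurd (lt_of_le_of_lt this hq1) (lt_irrefl _)
    · exact csSup_le (hQne x) (hQbdd x)

end HypSel
open MeasureTheory

/-- Hyperplane selection, one-dimensional case. -/
theorem hyperplane_selection_dim_one {X : Type*} [TopologicalSpace X] [PolishSpace X]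
    [MeasurableSpace X] [BorelSpace X]
    (f : X → ℝ → ℝ)
    (husa : ∀ γ : ℝ, AnalyticSet {p : X × ℝ | γ < f p.1 p.2})
    (b c : X → ℝ)
    (hdom : ∀ x y, f x y ≤ b x * y + c x) :
    ∃ B C : X → ℝ, Measurable B ∧ Measurable C ∧
      ∀ x y, f x y ≤ B x * y + C x := by
  classical
  -- the collection of values that any valid intercept must dominate
  set S0 : X → Set ℝ := fun x => insert (f x 0)
    {t | ∃ y y' : ℝ, 0 < y ∧ y' < 0 ∧ t = (y * f x y' - y' * f x y) / (y - y')} with hS0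
  have hS0ne : ∀ x, (S0 x).Nonempty := fun x => ⟨f x 0, mem_insert _ _⟩
  have hS0bdd : ∀ x, ∀ t ∈ S0 x, t ≤ c x := by
    intro x t ht
    rcases mem_insert_iff.1 ht with rfl | ⟨y, y', hy, hy', rfl⟩
    · simpa using hdom x 0
    · rw [div_le_iff₀ (by linarith : (0:ℝ) < y - y')]
      nlinarith [mul_le_mul_of_nonneg_left (hdom x y') hy.le,
        mul_le_mul_of_nonneg_left (hdom x y) (by linarith : (0:ℝ) ≤ -y')]
  set g : X → ℝ := fun x => sSup (S0 x) with hg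
  have hgmem : ∀ x, ∀ t ∈ S0 x, t ≤ g x :=
    fun x t ht => le_csSup ⟨c x, fun u hu => hS0bdd x u hu⟩ ht
  -- `g` is upper semi-analytic
  have hgusa : ∀ t : ℝ, AnalyticSet {x | t < g x} := by
    intro t
    have heq : {x | t < g x} =
        ((fun x : X => (x, (0:ℝ))) ⁻¹' {p : X × ℝ | t < f p.1 p.2}) ∪
        ⋃ q : ℚ, Prod.fst ''
          ({p : X × ℝ × ℝ | 0 < p.2.1} ∩ {p : X × ℝ × ℝ | p.2.2 < 0} ∩
           ((fun p : X × ℝ × ℝ => (p.1, p.2.1)) ⁻¹' {p : X × ℝ | (q:ℝ) < f p.1 p.2}) ∩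
           {p : X × ℝ × ℝ | t + p.2.2 * ((q:ℝ) - t) / p.2.1 < f p.1 p.2.2}) := by
      ext x
      constructor
      · intro hx
        have hx' : t < g x := hx
        obtain ⟨u, hu, htu⟩ := exists_lt_of_lt_csSup (hS0ne x) hx'
        rcases mem_insert_iff.1 hu with rfl | ⟨y, y', hy, hy', rfl⟩
        · exact Or.inl htu
        · refine Or.inr ?_
          have hyy' : (0:ℝ) < y - y' := by linarith
          have hD : t * (y - y') < y * f x y' - y' * f x y := (lt_div_iff₀ hyy').1 htu
          have hlow : (y * f x y' - t * (y - y')) / y' < f x y := by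
            rw [div_lt_iff_of_neg hy']
            nlinarith
          obtain ⟨q, hq1, hq2⟩ := exists_rat_btwn hlow
          have hq1' : (q:ℝ) * y' < y * f x y' - t * (y - y') := (div_lt_iff_of_neg hy').1 hq1
          have h8 : y' * ((q:ℝ) - t) < (f x y' - t) * y := by nlinarith
          have h9 : y' * ((q:ℝ) - t) / y < f x y' - t := (div_lt_iff₀ hy).2 h8
          have h10 : t + y' * ((q:ℝ) - t) / y < f x y' := by linarith
          exact mem_iUnion.2 ⟨q, ⟨(x, y, y'), ⟨⟨⟨hy, hy'⟩, hq2⟩, h10⟩, rfl⟩⟩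
      · intro hx
        rcases hx with hx | hx
        · have hx' : t < f x 0 := hx
          exact lt_of_lt_of_le hx' (hgmem _ _ (mem_insert _ _))
        · obtain ⟨q, p, hp, hpx⟩ := mem_iUnion.1 hx
          obtain ⟨x', y, y'⟩ := p
          obtain ⟨⟨⟨hy, hy'⟩, hq2⟩, h4⟩ := hp
          cases hpx
          have hy : (0:ℝ) < y := hy
          have hy' : y' < (0:ℝ) := hy'
          have hq2 : (q:ℝ) < f x' y := hq2
          have h4 : t + y' * ((q:ℝ) - t) / y < f x' y' := h4
          have hyy' : (0:ℝ) < y - y' := by linarith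
          have h8 : y' * ((q:ℝ) - t) / y < f x' y' - t := by linarith
          have h9 : y' * ((q:ℝ) - t) < (f x' y' - t) * y := (div_lt_iff₀ hy).1 h8
          have h3 : y' * f x' y < y' * (q:ℝ) := by nlinarith
          have h5 : t * (y - y') < y * f x' y' - y' * f x' y := by nlinarith
          have h6 : t < (y * f x' y' - y' * f x' y) / (y - y') := (lt_div_iff₀ hyy').2 h5
          exact lt_of_lt_of_le h6 (hgmem _ _ (mem_insert_iff.2 (Or.inr ⟨y, y', hy, hy', rfl⟩)))
    rw [heq]
    have h1 : AnalyticSet ((fun x : X => (x, (0:ℝ))) ⁻¹' {p : X × ℝ | t < f p.1 p.2}) :=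
      (husa t).preimage (continuous_id.prodMk continuous_const)
    refine HypSel.analyticSet_union h1 ?_
    refine AnalyticSet.iUnion fun q => ?_
    refine AnalyticSet.image_of_continuous ?_ continuous_fst
    have h2 : AnalyticSet {p : X × ℝ × ℝ | 0 < p.2.1} :=
      ((isOpen_lt continuous_const (continuous_fst.comp continuous_snd)).measurableSet).analyticSet
    have h3 : AnalyticSet {p : X × ℝ × ℝ | p.2.2 < 0} :=
      ((isOpen_lt (continuous_snd.comp continuous_snd) continuous_const).measurableSet).analyticSet
    have h4 : AnalyticSet
        ((fun p : X × ℝ × ℝ => (p.1, p.2.1)) ⁻¹' {p : X × ℝ | (q:ℝ) < f p.1 p.2}) :=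
      (husa q).preimage (continuous_fst.prodMk (continuous_fst.comp continuous_snd))
    have h5 : AnalyticSet {p : X × ℝ × ℝ | t + p.2.2 * ((q:ℝ) - t) / p.2.1 < f p.1 p.2.2} := by
      refine HypSel.analyticSet_lt (F := fun p : X × ℝ × ℝ => f p.1 p.2.2)
        (h := fun p : X × ℝ × ℝ => t + p.2.2 * ((q:ℝ) - t) / p.2.1) ?_ ?_
      · intro s
        exact (husa s).preimage (continuous_fst.prodMk (continuous_snd.comp continuous_snd))
      · exact measurable_const.add
          ((measurable_snd.snd.mul measurable_const).div measurable_snd.fst)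
    exact HypSel.AnalyticSet.inter' (HypSel.AnalyticSet.inter' (HypSel.AnalyticSet.inter' h2 h3) h4) h5
  -- a Borel intercept
  obtain ⟨C, hCmeas, hCg⟩ := HypSel.exists_borel_majorant hgusa
  have hfC0 : ∀ x, f x 0 ≤ C x := fun x => le_trans (hgmem x _ (mem_insert _ _)) (hCg x)
  have hchordC : ∀ x y y', 0 < y → y' < 0 →
      y * f x y' - y' * f x y ≤ C x * (y - y') := by
    intro x y y' hy hy'
    have h := le_trans (hgmem x _ (mem_insert_iff.2 (Or.inr ⟨y, y', hy, hy', rfl⟩))) (hCg x)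
    rwa [div_le_iff₀ (by linarith : (0:ℝ) < y - y')] at h
  -- the upper and lower slope functions
  set SU : X → Set ℝ := fun x => {t | ∃ y : ℝ, 0 < y ∧ t = (f x y - C x) / y} with hSU
  set SL : X → Set ℝ := fun x => {t | ∃ y : ℝ, y < 0 ∧ t = (f x y - C x) / y} with hSL
  have key : ∀ x, ∀ t ∈ SU x, ∀ t' ∈ SL x, t ≤ t' := by
    rintro x t ⟨y, hy, rfl⟩ t' ⟨y', hy', rfl⟩
    have hch := hchordC x y y' hy hy'
    rw [div_le_iff₀ hy, ← sub_nonneg]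
    have h7 : (f x y' - C x) / y' * y - (f x y - C x) =
        ((f x y' - C x) * y - (f x y - C x) * y') / y' := by
      have hy'ne : y' ≠ 0 := ne_of_lt hy'
      field_simp
    rw [h7]
    refine div_nonneg_iff.2 (Or.inr ⟨?_, hy'.le⟩)
    nlinarith
  have hSUne : ∀ x, (SU x).Nonempty := fun x => ⟨(f x 1 - C x) / 1, 1, one_pos, rfl⟩
  have hSLne : ∀ x, (SL x).Nonempty :=
    fun x => ⟨(f x (-1) - C x) / (-1), -1, by norm_num, rfl⟩
  have hSUbdd : ∀ x, BddAbove (SU x) := fun x =>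
    ⟨(f x (-1) - C x) / (-1), fun t ht => key x t ht _ ⟨-1, by norm_num, rfl⟩⟩
  have hSLbdd : ∀ x, BddBelow (SL x) := fun x =>
    ⟨(f x 1 - C x) / 1, fun t' ht' => key x _ ⟨1, one_pos, rfl⟩ t' ht'⟩
  set U : X → ℝ := fun x => sSup (SU x) with hU
  set L : X → ℝ := fun x => sInf (SL x) with hL
  have hUL : ∀ x, U x ≤ L x := fun x =>
    csSup_le (hSUne x) fun t ht => le_csInf (hSLne x) fun t' ht' => key x t ht t' ht'
  -- semi-analyticity of the slope functions
  have hUusa : ∀ q : ℚ, AnalyticSet {x | (q:ℝ) < U x} := by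
    intro q
    have heq : {x | (q:ℝ) < U x} = Prod.fst '' ({p : X × ℝ | 0 < p.2} ∩
        {p : X × ℝ | (q:ℝ) * p.2 + C p.1 < f p.1 p.2}) := by
      ext x
      simp only [mem_setOf_eq, mem_image, mem_inter_iff]
      constructor
      · intro hx
        obtain ⟨u, ⟨y, hy, rfl⟩, htu⟩ := exists_lt_of_lt_csSup (hSUne x) hx
        have := (lt_div_iff₀ hy).1 htu
        exact ⟨(x, y), ⟨hy, by linarith⟩, rfl⟩
      · rintro ⟨⟨x', y⟩, ⟨hy, hlt⟩, rfl⟩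
        simp only [mem_setOf_eq] at hy hlt
        have h1 : (q:ℝ) < (f x' y - C x') / y := (lt_div_iff₀ hy).2 (by linarith)
        exact lt_of_lt_of_le h1 (le_csSup (hSUbdd x') ⟨y, hy, rfl⟩)
    rw [heq]
    refine AnalyticSet.image_of_continuous ?_ continuous_fst
    refine HypSel.AnalyticSet.inter'
      ((isOpen_lt continuous_const continuous_snd).measurableSet.analyticSet) ?_
    refine HypSel.analyticSet_lt (F := fun p : X × ℝ => f p.1 p.2)
      (h := fun p : X × ℝ => (q:ℝ) * p.2 + C p.1) (fun s => husa s) ?_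
    exact (measurable_const.mul measurable_snd).add (hCmeas.comp measurable_fst)
  have hLlsa : ∀ q : ℚ, AnalyticSet {x | L x < (q:ℝ)} := by
    intro q
    have heq : {x | L x < (q:ℝ)} = Prod.fst '' ({p : X × ℝ | p.2 < 0} ∩
        {p : X × ℝ | (q:ℝ) * p.2 + C p.1 < f p.1 p.2}) := by
      ext x
      simp only [mem_setOf_eq, mem_image, mem_inter_iff]
      constructor
      · intro hx
        obtain ⟨u, ⟨y, hy, rfl⟩, htu⟩ := exists_lt_of_csInf_lt (hSLne x) hx
        have := (div_lt_iff_of_neg hy).1 htu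
        exact ⟨(x, y), ⟨hy, by linarith⟩, rfl⟩
      · rintro ⟨⟨x', y⟩, ⟨hy, hlt⟩, rfl⟩
        simp only [mem_setOf_eq] at hy hlt
        have h1 : (f x' y - C x') / y < (q:ℝ) := (div_lt_iff_of_neg hy).2 (by linarith)
        exact lt_of_le_of_lt (csInf_le (hSLbdd x') ⟨y, hy, rfl⟩) h1
    rw [heq]
    refine AnalyticSet.image_of_continuous ?_ continuous_fst
    refine HypSel.AnalyticSet.inter'
      ((isOpen_lt continuous_snd continuous_const).measurableSet.analyticSet) ?_
    refine HypSel.analyticSet_lt (F := fun p : X × ℝ => f p.1 p.2)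
      (h := fun p : X × ℝ => (q:ℝ) * p.2 + C p.1) (fun s => husa s) ?_
    exact (measurable_const.mul measurable_snd).add (hCmeas.comp measurable_fst)
  -- the Borel slope
  obtain ⟨B, hBmeas, hBUL⟩ := HypSel.exists_borel_between hUL hUusa hLlsa
  refine ⟨B, C, hBmeas, hCmeas, ?_⟩
  intro x y
  rcases lt_trichotomy y 0 with hy | rfl | hy
  · have h1 : L x ≤ (f x y - C x) / y := csInf_le (hSLbdd x) ⟨y, hy, rfl⟩
    have h2 : B x ≤ (f x y - C x) / y := le_trans (hBUL x).2 h1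
    have h3 : f x y - C x ≤ B x * y := (le_div_iff_of_neg hy).1 h2
    linarith
  · simpa using hfC0 x
  · have h1 : (f x y - C x) / y ≤ U x := le_csSup (hSUbdd x) ⟨y, hy, rfl⟩
    have h2 : (f x y - C x) / y ≤ B x := le_trans h1 (hBUL x).1
    have h3 : f x y - C x ≤ B x * y := (div_le_iff₀ hy).1 h2
    linarith
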